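/- (Matching bounded by T-join under a metric.) Let c be a metric on V, let T ⊆ V have even cardinality, and let J be a T-join (an edge set of the complete graph on V in which exactly the vertices of T have odd degree). Then there exists a perfect matching M on T (a set of |T|/2 vertex-disjoint edges covering exactly the vertices of T) with c(M) ≤ c(J). -/

import Mathlib

open Finset

namespace TSPPath

noncomputable section
open scoped Classical

/-- Edge set of the complete graph on `Fin n`: all unordered pairs of distinct vertices. -/
def Edges (n : ℕ) : Finset (Sym2 (Fin n)) := Finset.univ.filter (fun e => ¬ e.IsDiag)

/-- `cutSet n S` is `δ(S)`: the edges with exactly one endpoint in `S`. -/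
def cutSet (n : ℕ) (S : Finset (Fin n)) : Finset (Sym2 (Fin n)) :=
  (Edges n).filter (fun e => ∃ u v : Fin n, e = s(u, v) ∧ u ∈ S ∧ v ∉ S)

/-- `inSet n S` is `E(S)`: the edges with both endpoints in `S`. -/
def inSet (n : ℕ) (S : Finset (Fin n)) : Finset (Sym2 (Fin n)) :=
  (Edges n).filter (fun e => ∀ v ∈ e, v ∈ S)

/-- Degree of a vertex in an edge set. -/
def deg (n : ℕ) (H : Finset (Sym2 (Fin n))) (v : Fin n) : ℕ :=
  (H.filter (fun e => v ∈ e)).card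

/-- Degree of a vertex in an edge multiset (counting multiplicity). -/
def mdeg (n : ℕ) (L : Multiset (Sym2 (Fin n))) (v : Fin n) : ℕ :=
  (L.filter (fun e => v ∈ e)).card

/-- Feasibility for the path-variant Held–Karp relaxation with endpoints `s, t`. -/
def HKPathFeasible (n : ℕ) (s t : Fin n) (x : Sym2 (Fin n) → ℝ) : Prop :=
  (∀ e, 0 ≤ x e) ∧
  (∑ e ∈ cutSet n {s}, x e = 1) ∧
  (∑ e ∈ cutSet n {t}, x e = 1) ∧
  (∀ v : Fin n, v ≠ s → v ≠ t → ∑ e ∈ cutSet n {v}, x e = 2) ∧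
  (∀ S : Finset (Fin n), S.Nonempty → S ≠ Finset.univ →
      ((s ∈ S ∧ t ∉ S) ∨ (s ∉ S ∧ t ∈ S)) → 1 ≤ ∑ e ∈ cutSet n S, x e) ∧
  (∀ S : Finset (Fin n), S.Nonempty → S ≠ Finset.univ →
      ¬((s ∈ S ∧ t ∉ S) ∨ (s ∉ S ∧ t ∈ S)) → 2 ≤ ∑ e ∈ cutSet n S, x e)

/-- `c` is a metric: nonnegative, symmetric, vanishing on the diagonal, triangle inequality. -/
def IsMetric (n : ℕ) (c : Fin n → Fin n → ℝ) : Prop :=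
  (∀ u v, 0 ≤ c u v) ∧ (∀ u v, c u v = c v u) ∧ (∀ u, c u u = 0) ∧
  (∀ u v w, c u w ≤ c u v + c v w)

/-- Cost of an unordered edge (defined by symmetrization, which agrees with `c u v`
whenever `c` is symmetric). -/
def ecost (n : ℕ) (c : Fin n → Fin n → ℝ) (e : Sym2 (Fin n)) : ℝ :=
  Sym2.lift ⟨fun u v => (c u v + c v u) / 2, by intro u v; ring⟩ e

/-- `c(x) = ∑_{e ∈ E} x_e c(e)`. -/
def xcost (n : ℕ) (c : Fin n → Fin n → ℝ) (x : Sym2 (Fin n) → ℝ) : ℝ :=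
  ∑ e ∈ Edges n, x e * ecost n c e

/-- `c(F) = ∑_{e ∈ F} c(e)` for an edge set `F`. -/
def fcost (n : ℕ) (c : Fin n → Fin n → ℝ) (F : Finset (Sym2 (Fin n))) : ℝ :=
  ∑ e ∈ F, ecost n c e

/-- `H` is (the edge set of) a spanning tree of the complete graph on `Fin n`. -/
def IsSpanningTree (n : ℕ) (H : Finset (Sym2 (Fin n))) : Prop :=
  H ⊆ Edges n ∧ (SimpleGraph.fromEdgeSet (H : Set (Sym2 (Fin n)))).Connected ∧
    H.card = n - 1

/-- The wrong-parity set of an edge set `H`: internal vertices of odd degree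
together with the endpoints of even degree. -/
def wrongParity (n : ℕ) (s t : Fin n) (H : Finset (Sym2 (Fin n))) : Finset (Fin n) :=
  Finset.univ.filter (fun v =>
    if v = s ∨ v = t then Even (deg n H v) else Odd (deg n H v))

/-- `M` is a perfect matching on the vertex set `T`: vertex-disjoint edges covering
exactly the vertices of `T`. -/
def IsPerfectMatchingOn (n : ℕ) (T : Finset (Fin n)) (M : Finset (Sym2 (Fin n))) : Prop :=
  M ⊆ Edges n ∧ (∀ v ∈ T, deg n M v = 1) ∧ (∀ v : Fin n, v ∉ T → deg n M v = 0)

/-- `J` is a `T`-join: exactly the vertices of `T` have odd degree in `J`. -/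
def IsTJoin (n : ℕ) (T : Finset (Fin n)) (J : Finset (Sym2 (Fin n))) : Prop :=
  J ⊆ Edges n ∧ ∀ v : Fin n, Odd (deg n J v) ↔ v ∈ T

/-- There is a Hamiltonian path from `s` to `t` in the complete graph on `Fin n`
of cost (w.r.t. the metric `c`) at most `B`. -/
def ExistsHamPath (n : ℕ) (s t : Fin n) (c : Fin n → Fin n → ℝ) (B : ℝ) : Prop :=
  ∃ p : (⊤ : SimpleGraph (Fin n)).Walk s t,
    p.IsHamiltonian ∧ (p.edges.map (ecost n c)).sum ≤ B

/-- Connectivity of the multigraph `(V, L)` (equivalently, of its support graph,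
which must span all of `Fin n`). -/
def MConnected (n : ℕ) (L : Multiset (Sym2 (Fin n))) : Prop :=
  (SimpleGraph.fromEdgeSet {e | e ∈ L}).Connected

/-- The multiset of edges traversed by the walk given by a vertex list `w`. -/
def walkEdges (n : ℕ) (w : List (Fin n)) : Multiset (Sym2 (Fin n)) :=
  ((w.zip w.tail).map (fun p => s(p.1, p.2)) : List (Sym2 (Fin n)))

/-- `w` is an Eulerian trail from `s` to `t` of the edge multiset `L`: a walk from `s`
to `t` whose multiset of traversed edges is exactly `L` (with multiplicity). -/
def IsEulerianTrail (n : ℕ) (L : Multiset (Sym2 (Fin n))) (s t : Fin n)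
    (w : List (Fin n)) : Prop :=
  w.head? = some s ∧ w.getLast? = some t ∧ walkEdges n w = L

open scoped symmDiff

section helpers
lemma deg_erase (n : ℕ) (H : Finset (Sym2 (Fin n))) (e : Sym2 (Fin n)) (he : e ∈ H) (v : Fin n) :
    deg n (H.erase e) v = if v ∈ e then deg n H v - 1 else deg n H v := by
  unfold deg
  rw [Finset.filter_erase]
  split
  · exact Finset.card_erase_of_mem (Finset.mem_filter.2 ⟨he, ‹_›⟩)
  · rw [Finset.erase_eq_of_notMem]
    intro h
    exact ‹¬ v ∈ e› (Finset.mem_filter.1 h).2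

lemma deg_insert (n : ℕ) (H : Finset (Sym2 (Fin n))) (e : Sym2 (Fin n)) (he : e ∉ H) (v : Fin n) :
    deg n (insert e H) v = if v ∈ e then deg n H v + 1 else deg n H v := by
  unfold deg
  rw [Finset.filter_insert]
  split
  · rw [Finset.card_insert_of_notMem fun h => he (Finset.mem_filter.1 h).1]
  · rfl

lemma one_le_deg (n : ℕ) (H : Finset (Sym2 (Fin n))) (e : Sym2 (Fin n)) (he : e ∈ H)
    (v : Fin n) (hv : v ∈ e) : 1 ≤ deg n H v :=
  Finset.card_pos.2 ⟨e, Finset.mem_filter.2 ⟨he, hv⟩⟩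

lemma exists_edge (n : ℕ) (H : Finset (Sym2 (Fin n))) (v : Fin n) (h : 0 < deg n H v) :
    ∃ e ∈ H, v ∈ e := by
  obtain ⟨e, he⟩ := Finset.card_pos.1 h
  exact ⟨e, (Finset.mem_filter.1 he).1, (Finset.mem_filter.1 he).2⟩

lemma even_card_symmDiff_pair {α : Type*} [DecidableEq α] (T : Finset α) (a b : α)
    (hab : a ≠ b) (hT : Even T.card) : Even (T ∆ ({a, b} : Finset α)).card := by
  by_cases ha : a ∈ T <;> by_cases hb : b ∈ T
  · have : T ∆ ({a, b} : Finset α) = (T.erase a).erase b := by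
      ext x
      simp only [Finset.mem_symmDiff, Finset.mem_insert, Finset.mem_singleton,
        Finset.mem_erase]
      constructor
      · rintro (⟨hx, h2⟩ | ⟨(rfl | rfl), h2⟩)
        · exact ⟨fun h => h2 (Or.inr h), fun h => h2 (Or.inl h), hx⟩
        · exact absurd ha h2
        · exact absurd hb h2
      · rintro ⟨h1, h2, h3⟩
        exact Or.inl ⟨h3, by tauto⟩
    rw [this, Finset.card_erase_of_mem (Finset.mem_erase.2 ⟨hab.symm, hb⟩),
      Finset.card_erase_of_mem ha]
    have h1 : 2 ≤ T.card := by
      have := Finset.one_lt_card.2 ⟨a, ha, b, hb, hab⟩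
      omega
    obtain ⟨k, hk⟩ := hT
    refine ⟨k - 1, by omega⟩
  · have : T ∆ ({a, b} : Finset α) = insert b (T.erase a) := by
      ext x
      simp only [Finset.mem_symmDiff, Finset.mem_insert, Finset.mem_singleton,
        Finset.mem_erase]
      constructor
      · rintro (⟨hx, h2⟩ | ⟨(rfl | rfl), h2⟩)
        · exact Or.inr ⟨by tauto, hx⟩
        · exact absurd ha h2
        · exact Or.inl rfl
      · rintro (rfl | ⟨h1, h2⟩)
        · exact Or.inr ⟨Or.inr rfl, hb⟩
        · exact Or.inl ⟨h2, by rintro (rfl | rfl); exacts [h1 rfl, hb h2]⟩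
    rw [this, Finset.card_insert_of_notMem (fun h => hb (Finset.mem_of_mem_erase h)),
      Finset.card_erase_of_mem ha]
    have h1 : 1 ≤ T.card := Finset.card_pos.2 ⟨a, ha⟩
    obtain ⟨k, hk⟩ := hT
    refine ⟨k, by omega⟩
  · have : T ∆ ({a, b} : Finset α) = insert a (T.erase b) := by
      ext x
      simp only [Finset.mem_symmDiff, Finset.mem_insert, Finset.mem_singleton,
        Finset.mem_erase]
      constructor
      · rintro (⟨hx, h2⟩ | ⟨(rfl | rfl), h2⟩)
        · exact Or.inr ⟨by tauto, hx⟩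
        · exact Or.inl rfl
        · exact absurd hb h2
      · rintro (rfl | ⟨h1, h2⟩)
        · exact Or.inr ⟨Or.inl rfl, ha⟩
        · exact Or.inl ⟨h2, by rintro (rfl | rfl); exacts [ha h2, h1 rfl]⟩
    rw [this, Finset.card_insert_of_notMem (fun h => ha (Finset.mem_of_mem_erase h)),
      Finset.card_erase_of_mem hb]
    have h1 : 1 ≤ T.card := Finset.card_pos.2 ⟨b, hb⟩
    obtain ⟨k, hk⟩ := hT
    refine ⟨k, by omega⟩
  · have : T ∆ ({a, b} : Finset α) = insert a (insert b T) := by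
      ext x
      simp only [Finset.mem_symmDiff, Finset.mem_insert, Finset.mem_singleton]
      constructor
      · rintro (⟨hx, h2⟩ | ⟨(rfl | rfl), h2⟩)
        · exact Or.inr (Or.inr hx)
        · exact Or.inl rfl
        · exact Or.inr (Or.inl rfl)
      · rintro (rfl | rfl | hx)
        · exact Or.inr ⟨Or.inl rfl, ha⟩
        · exact Or.inr ⟨Or.inr rfl, hb⟩
        · exact Or.inl ⟨hx, by rintro (rfl | rfl); exacts [ha hx, hb hx]⟩
    rw [this, Finset.card_insert_of_notMem (by simp [ha, hab]),
      Finset.card_insert_of_notMem hb]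
    obtain ⟨k, hk⟩ := hT
    refine ⟨k + 1, by omega⟩

lemma ecost_mk (n : ℕ) (c : Fin n → Fin n → ℝ) (hsym : ∀ u v, c u v = c v u) (a b : Fin n) :
    ecost n c s(a, b) = c a b := by
  simp only [ecost, Sym2.lift_mk]
  rw [hsym b a]
  ring

lemma ecost_nonneg (n : ℕ) (c : Fin n → Fin n → ℝ) (hc : ∀ u v, 0 ≤ c u v)
    (e : Sym2 (Fin n)) : 0 ≤ ecost n c e := by
  induction e using Sym2.ind with
  | _ a b =>
    simp only [ecost, Sym2.lift_mk]
    have := hc a b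
    have := hc b a
    linarith

lemma tjoin_erase (n : ℕ) (T : Finset (Fin n)) (J : Finset (Sym2 (Fin n)))
    (hJ : IsTJoin n T J) (a b : Fin n) (hab : a ≠ b) (he : s(a, b) ∈ J) :
    IsTJoin n (T ∆ ({a, b} : Finset (Fin n))) (J.erase s(a, b)) := by
  refine ⟨fun e h => hJ.1 (Finset.mem_of_mem_erase h), fun v => ?_⟩
  rw [deg_erase n J _ he v]
  have hTv := hJ.2 v
  rw [Finset.mem_symmDiff]
  by_cases hv : v ∈ s(a, b)
  · have hv2 : v ∈ ({a, b} : Finset (Fin n)) := by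
      rw [Sym2.mem_iff] at hv
      simpa using hv
    have hd : 1 ≤ deg n J v := one_le_deg n J _ he v hv
    rw [if_pos hv]
    rw [Nat.odd_iff] at hTv ⊢
    constructor
    · intro h
      refine Or.inr ⟨hv2, fun hvT => ?_⟩
      rw [← hTv] at hvT
      omega
    · rintro (⟨hvT, h2⟩ | ⟨h2, hvT⟩)
      · exact absurd hv2 h2
      · rw [← hTv] at hvT
        omega
  · have hv2 : v ∉ ({a, b} : Finset (Fin n)) := by
      rw [Sym2.mem_iff] at hv
      simpa using hv
    rw [if_neg hv, hTv]
    constructor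
    · intro h
      exact Or.inl ⟨h, hv2⟩
    · rintro (⟨h, _⟩ | ⟨h, _⟩)
      · exact h
      · exact absurd h hv2
end helpers

lemma main_aux (n : ℕ) (c : Fin n → Fin n → ℝ) (hc : IsMetric n c) :
    ∀ k (J : Finset (Sym2 (Fin n))), J.card = k → ∀ T : Finset (Fin n), Even T.card →
    IsTJoin n T J → ∃ M : Finset (Sym2 (Fin n)), IsPerfectMatchingOn n T M ∧
      fcost n c M ≤ fcost n c J := by
  intro k
  induction k using Nat.strong_induction_on with
  | _ k IH =>
  intro J hJk T hT hJ
  by_cases hTe : T = ∅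
  · refine ⟨∅, ⟨Finset.empty_subset _, ?_, ?_⟩, ?_⟩
    · intro v hv
      simp [hTe] at hv
    · intro v _
      simp [deg]
    · simp only [fcost, Finset.sum_empty]
      exact Finset.sum_nonneg fun e _ => ecost_nonneg n c hc.1 e
  · obtain ⟨t, ht⟩ := Finset.nonempty_iff_ne_empty.2 hTe
    have hodd : Odd (deg n J t) := (hJ.2 t).2 ht
    have hpos : 0 < deg n J t := hodd.pos
    obtain ⟨e, heJ, hte⟩ := exists_edge n J t hpos
    obtain ⟨u, heq⟩ : ∃ u, s(t, u) = e := ⟨Sym2.Mem.other hte, Sym2.other_spec hte⟩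
    have htu : t ≠ u := by
      intro h
      have hdiag : e.IsDiag := by
        rw [← heq, ← h]
        exact Sym2.mk_isDiag_iff.2 rfl
      exact (Finset.mem_filter.1 (hJ.1 heJ)).2 hdiag
    have hmemE : ∀ v : Fin n, v ∈ e ↔ v = t ∨ v = u := by
      intro v
      rw [← heq, Sym2.mem_iff]
    set T' := T ∆ ({t, u} : Finset (Fin n)) with hT'def
    set J' := J.erase e with hJ'def
    have hJ'join : IsTJoin n T' J' := by
      rw [hJ'def, ← heq]
      exact tjoin_erase n T J hJ t u htu (heq ▸ heJ)
    have hT'even : Even T'.card := even_card_symmDiff_pair T t u htu hT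
    have hcard : J'.card < k := hJk ▸ Finset.card_erase_lt_of_mem heJ
    obtain ⟨M', hM', hcost'⟩ := IH J'.card hcard J' rfl T' hT'even hJ'join
    have hfJ : fcost n c J' + ecost n c e = fcost n c J :=
      Finset.sum_erase_add J _ heJ
    have htT' : t ∉ T' := by
      rw [hT'def, Finset.mem_symmDiff]
      rintro (⟨_, h2⟩ | ⟨_, h2⟩)
      · exact h2 (by simp)
      · exact h2 ht
    have hdt : deg n M' t = 0 := hM'.2.2 t htT'
    have hecost : ecost n c e = c t u := by rw [← heq, ecost_mk n c hc.2.1]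
    by_cases huT : u ∈ T
    · -- both endpoints in T : use e itself
      have huT' : u ∉ T' := by
        rw [hT'def, Finset.mem_symmDiff]
        rintro (⟨_, h2⟩ | ⟨_, h2⟩)
        · exact h2 (by simp)
        · exact h2 huT
      have heM' : e ∉ M' := fun h =>
        absurd hdt (by have := one_le_deg n M' e h t ((hmemE t).2 (Or.inl rfl)); omega)
      refine ⟨insert e M', ⟨?_, ?_, ?_⟩, ?_⟩
      · exact Finset.insert_subset (hJ.1 heJ) hM'.1
      · intro v hv
        rw [deg_insert n M' e heM' v]
        by_cases hve : v ∈ e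
        · rcases (hmemE v).1 hve with hv' | hv'
          · rw [if_pos hve, hv', hdt]
          · rw [if_pos hve, hv', hM'.2.2 u huT']
        · have hvT' : v ∈ T' := by
            rw [hT'def, Finset.mem_symmDiff]
            refine Or.inl ⟨hv, fun h => hve ((hmemE v).2 (by simpa using h))⟩
          rw [if_neg hve, hM'.2.1 v hvT']
      · intro v hv
        have hve : v ∉ e := fun h => by
          rcases (hmemE v).1 h with rfl | rfl
          exacts [hv ht, hv huT]
        rw [deg_insert n M' e heM' v, if_neg hve]
        refine hM'.2.2 v fun h => ?_
        rw [hT'def, Finset.mem_symmDiff] at h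
        rcases h with ⟨h1, _⟩ | ⟨h1, _⟩
        · exact hv h1
        · exact hve ((hmemE v).2 (by simpa using h1))
      · rw [fcost, Finset.sum_insert heM']
        have : (∑ x ∈ M', ecost n c x) ≤ fcost n c J' := hcost'
        linarith [hfJ]
    · -- u ∉ T : shortcut through u
      have huT' : u ∈ T' := by
        rw [hT'def, Finset.mem_symmDiff]
        exact Or.inr ⟨by simp, huT⟩
      have hdu : deg n M' u = 1 := hM'.2.1 u huT'
      obtain ⟨f, hfM', huf⟩ := exists_edge n M' u (by omega)
      obtain ⟨w, hfeq⟩ : ∃ w, s(u, w) = f := ⟨Sym2.Mem.other huf, Sym2.other_spec huf⟩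
      have huw : u ≠ w := by
        intro h
        have hdiag : f.IsDiag := by
          rw [← hfeq, ← h]
          exact Sym2.mk_isDiag_iff.2 rfl
        exact (Finset.mem_filter.1 (hM'.1 hfM')).2 hdiag
      have hmemF : ∀ v : Fin n, v ∈ f ↔ v = u ∨ v = w := by
        intro v
        rw [← hfeq, Sym2.mem_iff]
      have hwT' : w ∈ T' := by
        by_contra h
        have := hM'.2.2 w h
        have := one_le_deg n M' f hfM' w ((hmemF w).2 (Or.inr rfl))
        omega
      have htw : t ≠ w := fun h => htT' (h ▸ hwT')
      have hwT : w ∈ T := by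
        rw [hT'def, Finset.mem_symmDiff] at hwT'
        rcases hwT' with ⟨h1, _⟩ | ⟨h1, _⟩
        · exact h1
        · simp only [Finset.mem_insert, Finset.mem_singleton] at h1
          rcases h1 with rfl | rfl
          exacts [absurd rfl htw, absurd rfl huw]
      set g := s(t, w) with hg
      have htg : t ∈ g := by rw [hg, Sym2.mem_iff]; exact Or.inl rfl
      have hgM' : g ∉ M' := fun h =>
        absurd hdt (by have := one_le_deg n M' g h t htg; omega)
      have hgMe : g ∉ M'.erase f := fun h => hgM' (Finset.mem_of_mem_erase h)
      have hgE : g ∈ Edges n := by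
        rw [Edges, Finset.mem_filter]
        exact ⟨Finset.mem_univ _, fun h => htw (Sym2.mk_isDiag_iff.1 h)⟩
      have hmemG : ∀ v : Fin n, v ∈ g ↔ v = t ∨ v = w := fun v => Sym2.mem_iff
      have hdw : deg n M' w = 1 := hM'.2.1 w hwT'
      refine ⟨insert g (M'.erase f), ⟨?_, ?_, ?_⟩, ?_⟩
      · exact Finset.insert_subset hgE fun x hx => hM'.1 (Finset.mem_of_mem_erase hx)
      · intro v hv
        rw [deg_insert n _ g hgMe v, deg_erase n M' f hfM' v]
        by_cases hvg : v ∈ g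
        · rcases (hmemG v).1 hvg with hv' | hv'
          · have hvf : v ∉ f := fun h => by
              rw [hv'] at h
              rcases (hmemF t).1 h with h2 | h2
              exacts [htu h2, htw h2]
            rw [if_pos hvg, if_neg hvf, hv', hdt]
          · have hvf : v ∈ f := by rw [hv']; exact (hmemF w).2 (Or.inr rfl)
            rw [if_pos hvg, if_pos hvf, hv', hdw]
        · have hvt : v ≠ t := fun h => hvg ((hmemG v).2 (Or.inl h))
          have hvw : v ≠ w := fun h => hvg ((hmemG v).2 (Or.inr h))
          have hvu : v ≠ u := fun h => huT (h ▸ hv)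
          have hvf : v ∉ f := fun h => by
            rcases (hmemF v).1 h with rfl | rfl
            exacts [hvu rfl, hvw rfl]
          have hvT' : v ∈ T' := by
            rw [hT'def, Finset.mem_symmDiff]
            exact Or.inl ⟨hv, by simp [hvt, hvu]⟩
          rw [if_neg hvg, if_neg hvf, hM'.2.1 v hvT']
      · intro v hv
        rw [deg_insert n _ g hgMe v, deg_erase n M' f hfM' v]
        have hvt : v ≠ t := fun h => hv (h ▸ ht)
        have hvw : v ≠ w := fun h => hv (h ▸ hwT)
        have hvg : v ∉ g := fun h => by
          rcases (hmemG v).1 h with rfl | rfl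
          exacts [hvt rfl, hvw rfl]
        rw [if_neg hvg]
        by_cases hvu : v = u
        · rw [if_pos (by rw [hvu]; exact (hmemF u).2 (Or.inl rfl)), hvu, hdu]
        · have hvf : v ∉ f := fun h => by
            rcases (hmemF v).1 h with rfl | rfl
            exacts [hvu rfl, hvw rfl]
          have hvT' : v ∉ T' := by
            rw [hT'def, Finset.mem_symmDiff]
            rintro (⟨h1, _⟩ | ⟨h1, _⟩)
            · exact hv h1
            · simp only [Finset.mem_insert, Finset.mem_singleton] at h1
              rcases h1 with rfl | rfl
              exacts [hvt rfl, hvu rfl]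
          rw [if_neg hvf, hM'.2.2 v hvT']
      · have h1 : fcost n c (M'.erase f) + ecost n c f = fcost n c M' :=
          Finset.sum_erase_add M' _ hfM'
        have h2 : fcost n c (insert g (M'.erase f)) = ecost n c g + fcost n c (M'.erase f) := by
          rw [fcost, Finset.sum_insert hgMe]
          rfl
        have htri : ecost n c g = c t w := by rw [hg, ecost_mk n c hc.2.1]
        have hef : ecost n c f = c u w := by rw [← hfeq, ecost_mk n c hc.2.1]
        have := hc.2.2.2 t u w
        rw [h2, htri]
        linarith [hcost', hfJ, hecost]
  

/-- (Matching bounded by `T`-join under a metric.) If `T` has even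
cardinality and `J` is a `T`-join, then there is a perfect matching `M` on `T` with
`c(M) ≤ c(J)`. -/
theorem matching_le_Tjoin (n : ℕ)
    (c : Fin n → Fin n → ℝ) (hc : IsMetric n c)
    (T : Finset (Fin n)) (hT : Even T.card)
    (J : Finset (Sym2 (Fin n))) (hJ : IsTJoin n T J) :
    ∃ M : Finset (Sym2 (Fin n)), IsPerfectMatchingOn n T M ∧
      fcost n c M ≤ fcost n c J :=
  main_aux n c hc J.card J rfl T hT hJ

end
end TSPPath
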